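/- For the block compound symmetry precision matrix Σ_l⁻¹ applied to a vector partitioned by treatment within the block: the GLS treatment effect for L equal-sized strata (n_l = n) with covariance I_L ⊗ J_n + σ_0² I_{Ln} can be written as a convex combination τ̂ = λ τ̂_1 + (1−λ) τ̂_0 with λ ∈ [0,1], where τ̂_1 is a weighted average of within-stratum mean differences and τ̂_0 = Ȳ_1 − Ȳ_0, with weight λ = N Σ_l n_{l(0)}n_{l(1)} / (n_1 n_0 σ_0² + N Σ_l n_{l(0)}n_{l(1)}). -/

import Mathlib

open Matrix

/-- Stratified design with L equal-sized strata and covariance I_L ⊗ J_n + σ₀² I: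
the GLS treatment effect is a convex combination τ̂ = λ τ̂₁ + (1−λ) τ̂₀ with
λ = N·Σ_l n_{l(0)}n_{l(1)} / (n₁n₀σ₀² + N·Σ_l n_{l(0)}n_{l(1)}) ∈ [0,1],
where τ̂₁ is the weighted average of within-stratum mean differences and τ̂₀ = Ȳ₁ − Ȳ₀. -/
theorem stmt16 (L n : ℕ) (hL : 0 < L) (hn : 0 < n) (σ02 : ℝ) (hσ : 0 < σ02)
    (A Y : Fin L × Fin n → ℝ) (hA01 : ∀ p, A p = 0 ∨ A p = 1)
    (n1l n0l : Fin L → ℝ)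
    (hn1l : ∀ l, n1l l = ∑ j, A (l, j)) (hn0l : ∀ l, n0l l = n - n1l l)
    (hpos1 : ∀ l, 0 < n1l l) (hpos0 : ∀ l, 0 < n0l l)
    (n1 n0 N : ℝ) (hn1 : n1 = ∑ l, n1l l) (hn0 : n0 = ∑ l, n0l l) (hN : N = (L : ℝ) * n)
    (Sig : Matrix (Fin L × Fin n) (Fin L × Fin n) ℝ)
    (hSig : ∀ p q, Sig p q = (if p.1 = q.1 then 1 else 0) + (if p = q then σ02 else 0))
    (Yl1 Yl0 : Fin L → ℝ)
    (hYl1 : ∀ l, Yl1 l = (∑ j, A (l, j) * Y (l, j)) / n1l l)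
    (hYl0 : ∀ l, Yl0 l = (∑ j, (1 - A (l, j)) * Y (l, j)) / n0l l)
    (Yb1 Yb0 : ℝ)
    (hYb1 : Yb1 = (∑ p, A p * Y p) / n1)
    (hYb0 : Yb0 = (∑ p, (1 - A p) * Y p) / n0)
    (τ1 τ0 lam : ℝ)
    (hτ1 : τ1 = (∑ l, n0l l * n1l l * (Yl1 l - Yl0 l)) / (∑ l, n0l l * n1l l))
    (hτ0 : τ0 = Yb1 - Yb0)
    (hlam : lam = N * (∑ l, n0l l * n1l l) / (n1 * n0 * σ02 + N * (∑ l, n0l l * n1l l)))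
    (one : Fin L × Fin n → ℝ) (hone : one = fun _ => 1)
    (μ τ : ℝ)
    (heq1 : one ⬝ᵥ (Sig⁻¹ *ᵥ (Y - μ • one - τ • A)) = 0)
    (heq2 : A ⬝ᵥ (Sig⁻¹ *ᵥ (Y - μ • one - τ • A)) = 0) :
    lam ∈ Set.Icc (0 : ℝ) 1 ∧ τ = lam * τ1 + (1 - lam) * τ0 := by
  classical
  have hn' : (0:ℝ) < (n:ℝ) := by exact_mod_cast hn
  have hL' : (0:ℝ) < (L:ℝ) := by exact_mod_cast hL
  have hσn : (0:ℝ) < σ02 + (n:ℝ) := by positivity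
  set c : ℝ := (σ02 + (n:ℝ))⁻¹ with hcdef
  have hc1 : c * (σ02 + (n:ℝ)) = 1 := inv_mul_cancel₀ (ne_of_gt hσn)
  set K : Matrix (Fin L × Fin n) (Fin L × Fin n) ℝ :=
    Matrix.of (fun p q => if p.1 = q.1 then (1:ℝ) else 0) with hKdef
  have hKapp : ∀ p q : Fin L × Fin n, K p q = if p.1 = q.1 then (1:ℝ) else 0 :=
    fun p q => rfl
  have hSigK : Sig = K + σ02 • (1 : Matrix (Fin L × Fin n) (Fin L × Fin n) ℝ) := by
    ext p q
    rw [hSig]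
    simp only [Matrix.add_apply, Matrix.smul_apply, Matrix.one_apply, hKapp, smul_eq_mul]
    split_ifs <;> ring
  have hKK : K * K = ((n:ℝ)) • K := by
    ext p q
    rw [Matrix.mul_apply]
    simp only [hKapp, Matrix.smul_apply, smul_eq_mul]
    rw [Fintype.sum_prod_type]
    have h1 : ∀ l' : Fin L,
        (∑ _j : Fin n, ((if p.1 = l' then (1:ℝ) else 0) * (if l' = q.1 then 1 else 0)))
        = (n:ℝ) * ((if p.1 = l' then (1:ℝ) else 0) * (if l' = q.1 then 1 else 0)) := by
      intro l'
      rw [Finset.sum_const]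
      simp [mul_comm]
    rw [Finset.sum_congr rfl (fun l' _ => h1 l'), ← Finset.mul_sum]
    congr 1
    simp [ite_mul, Finset.sum_ite_eq]
  have hmul : Sig * (σ02⁻¹ • ((1 : Matrix (Fin L × Fin n) (Fin L × Fin n) ℝ) - c • K)) = 1 := by
    rw [hSigK, Matrix.mul_smul, Matrix.add_mul, Matrix.mul_sub, Matrix.mul_sub,
      Matrix.mul_one, Matrix.mul_one, Matrix.mul_smul, Matrix.mul_smul, hKK,
      Matrix.smul_mul, Matrix.one_mul]
    have hσ0 : σ02 ≠ 0 := ne_of_gt hσ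
    match_scalars
    · field_simp
      linear_combination -hc1
    · field_simp
  have hInv : Sig⁻¹ = σ02⁻¹ • ((1 : Matrix (Fin L × Fin n) (Fin L × Fin n) ℝ) - c • K) :=
    Matrix.inv_eq_right_inv hmul
  -- residual vector
  set r : Fin L × Fin n → ℝ := fun p => Y p - μ - τ * A p with hrdef
  have hr : Y - μ • one - τ • A = r := by
    funext p
    simp only [hrdef, hone, Pi.sub_apply, Pi.smul_apply, smul_eq_mul]
    ring
  rw [hr, hInv] at heq1 heq2
  have hmv : ∀ q : Fin L × Fin n,
      ((σ02⁻¹ • ((1 : Matrix (Fin L × Fin n) (Fin L × Fin n) ℝ) - c • K)) *ᵥ r) q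
        = σ02⁻¹ * (r q - c * ∑ j, r (q.1, j)) := by
    intro q
    have hent : ∀ p : Fin L × Fin n,
        (σ02⁻¹ • ((1 : Matrix (Fin L × Fin n) (Fin L × Fin n) ℝ) - c • K)) q p
          = σ02⁻¹ * ((if q = p then (1:ℝ) else 0) - c * (if q.1 = p.1 then 1 else 0)) := by
      intro p
      simp [Matrix.smul_apply, Matrix.sub_apply, Matrix.one_apply, hKapp]
    simp only [Matrix.mulVec, dotProduct, hent]
    have e : ∀ p : Fin L × Fin n,
        σ02⁻¹ * ((if q = p then (1:ℝ) else 0) - c * (if q.1 = p.1 then 1 else 0)) * r p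
          = σ02⁻¹ * (((if q = p then (1:ℝ) else 0) * r p)
              - c * ((if q.1 = p.1 then (1:ℝ) else 0) * r p)) := by
      intro p; ring
    rw [Finset.sum_congr rfl (fun p _ => e p), ← Finset.mul_sum, Finset.sum_sub_distrib,
      ← Finset.mul_sum]
    congr 2
    · simp [ite_mul, Finset.sum_ite_eq]
    · rw [Fintype.sum_prod_type]
      have e2 : ∀ l : Fin L, (∑ j, (if q.1 = l then (1:ℝ) else 0) * r (l, j))
          = if q.1 = l then ∑ j, r (l, j) else 0 := by
        intro l; split_ifs <;> simp
      rw [Finset.sum_congr rfl (fun l _ => e2 l), Finset.sum_ite_eq]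
      simp
  have hdot : ∀ x : Fin L × Fin n → ℝ,
      x ⬝ᵥ ((σ02⁻¹ • ((1 : Matrix (Fin L × Fin n) (Fin L × Fin n) ℝ) - c • K)) *ᵥ r)
        = σ02⁻¹ * ((∑ p, x p * r p)
            - c * ∑ l, (∑ j, x (l, j)) * (∑ j, r (l, j))) := by
    intro x
    simp only [dotProduct, hmv]
    have e : ∀ p : Fin L × Fin n,
        x p * (σ02⁻¹ * (r p - c * ∑ j, r (p.1, j)))
          = σ02⁻¹ * (x p * r p - c * (x p * ∑ j, r (p.1, j))) := by
      intro p; ring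
    rw [Finset.sum_congr rfl (fun p _ => e p), ← Finset.mul_sum, Finset.sum_sub_distrib,
      ← Finset.mul_sum]
    congr 2
    rw [Fintype.sum_prod_type]
    congr 1
    exact Finset.sum_congr rfl (fun l _ => by rw [Finset.sum_mul])
  rw [hdot] at heq1 heq2
  have hσ0 : σ02⁻¹ ≠ 0 := inv_ne_zero (ne_of_gt hσ)
  have E1 : (∑ p, one p * r p) - c * ∑ l, (∑ j, one (l, j)) * (∑ j, r (l, j)) = 0 :=
    (mul_eq_zero.mp heq1).resolve_left hσ0
  have E2 : (∑ p, A p * r p) - c * ∑ l, (∑ j, A (l, j)) * (∑ j, r (l, j)) = 0 :=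
    (mul_eq_zero.mp heq2).resolve_left hσ0
  -- stratum sums
  have hnne : Nonempty (Fin L) := ⟨⟨0, hL⟩⟩
  set S : Fin L → ℝ := fun l => ∑ j, Y (l, j) with hSdef
  set T : Fin L → ℝ := fun l => ∑ j, A (l, j) * Y (l, j) with hTdef
  set D : ℝ := ∑ l, n0l l * n1l l with hDdef
  have hAA : ∀ p, A p * A p = A p := by
    intro p; rcases hA01 p with h | h <;> rw [h] <;> ring
  have hRl : ∀ l, (∑ j, r (l, j)) = S l - (n:ℝ) * μ - τ * n1l l := by
    intro l
    have e : ∀ j : Fin n, r (l, j) = Y (l, j) - μ - τ * A (l, j) := fun j => rfl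
    rw [Finset.sum_congr rfl (fun j _ => e j), Finset.sum_sub_distrib,
      Finset.sum_sub_distrib, Finset.sum_const, ← Finset.mul_sum, ← hn1l l]
    simp [hSdef]
  have hn1pos : 0 < n1 := by
    rw [hn1]; exact Finset.sum_pos (fun l _ => hpos1 l) Finset.univ_nonempty
  have hn0pos : 0 < n0 := by
    rw [hn0]; exact Finset.sum_pos (fun l _ => hpos0 l) Finset.univ_nonempty
  have hDpos : 0 < D := by
    rw [hDdef]
    exact Finset.sum_pos (fun l _ => mul_pos (hpos0 l) (hpos1 l)) Finset.univ_nonempty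
  have cancel : ∀ a b : ℝ, a ≠ 0 → a * (b / a) = b := by
    intro a b h
    rw [mul_comm, div_mul_cancel₀ _ h]
  have hTl : ∀ l, T l = n1l l * Yl1 l := by
    intro l
    rw [hYl1 l, cancel _ _ (ne_of_gt (hpos1 l))]
  have hSTl : ∀ l, S l = T l + n0l l * Yl0 l := by
    intro l
    have h0 : n0l l * Yl0 l = ∑ j, (1 - A (l, j)) * Y (l, j) := by
      rw [hYl0 l, cancel _ _ (ne_of_gt (hpos0 l))]
    have h1 : S l - T l = ∑ j, (1 - A (l, j)) * Y (l, j) := by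
      simp only [hSdef, hTdef]
      rw [← Finset.sum_sub_distrib]
      exact Finset.sum_congr rfl (fun j _ => by ring)
    linarith
  have hTT : (∑ l, T l) = n1 * Yb1 := by
    have h2 : (∑ p : Fin L × Fin n, A p * Y p) = ∑ l, T l := by
      rw [Fintype.sum_prod_type]
    rw [hYb1, h2, cancel _ _ (ne_of_gt hn1pos)]
  have hSS : (∑ l, S l) = n1 * Yb1 + n0 * Yb0 := by
    have h2 : (∑ p : Fin L × Fin n, (1 - A p) * Y p) = (∑ l, S l) - (∑ l, T l) := by
      rw [Fintype.sum_prod_type, ← Finset.sum_sub_distrib]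
      refine Finset.sum_congr rfl (fun l _ => ?_)
      simp only [hSdef, hTdef]
      rw [← Finset.sum_sub_distrib]
      exact Finset.sum_congr rfl (fun j _ => by ring)
    have h3 : n0 * Yb0 = (∑ l, S l) - (∑ l, T l) := by
      rw [hYb0, h2, cancel _ _ (ne_of_gt hn0pos)]
    linarith [hTT]
  have hNsum : n1 + n0 = N := by
    rw [hn1, hn0, ← Finset.sum_add_distrib, hN]
    have e : ∀ l : Fin L, n1l l + n0l l = (n:ℝ) := by
      intro l; rw [hn0l l]; ring
    rw [Finset.sum_congr rfl (fun l _ => e l), Finset.sum_const, Finset.card_univ,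
      Fintype.card_fin, nsmul_eq_mul]
  -- equation 1
  have hone' : ∀ p : Fin L × Fin n, one p = 1 := by intro p; rw [hone]
  simp only [hone', one_mul, Finset.sum_const, Finset.card_univ, Fintype.card_fin,
    nsmul_eq_mul] at E1
  have hsumR : (∑ p : Fin L × Fin n, r p) = ∑ l, ∑ j, r (l, j) :=
    Fintype.sum_prod_type _
  rw [hsumR, ← Finset.mul_sum] at E1
  have hcn : 1 - c * (n:ℝ) = c * σ02 := by linear_combination -hc1
  have hcσpos : (0:ℝ) < c * σ02 := mul_pos (inv_pos.mpr hσn) hσ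
  have E1' : (∑ l, ∑ j, r (l, j)) * (1 - c * (n:ℝ)) = 0 := by linear_combination E1
  have hRR : (∑ l, ∑ j, r (l, j)) = 0 := by
    rcases mul_eq_zero.mp E1' with h | h
    · exact h
    · exact absurd (hcn ▸ h) (ne_of_gt hcσpos)
  have hconst : (∑ _l : Fin L, (n:ℝ) * μ) = N * μ := by
    rw [Finset.sum_const, Finset.card_univ, Fintype.card_fin, nsmul_eq_mul, hN]; ring
  have e1 : (∑ l, S l) - N * μ - τ * n1 = 0 := by
    rw [Finset.sum_congr rfl (fun l _ => hRl l), Finset.sum_sub_distrib,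
      Finset.sum_sub_distrib, hconst, ← Finset.mul_sum, ← hn1] at hRR
    exact hRR
  -- equation 2
  have hArl : ∀ l, (∑ j, A (l, j) * r (l, j)) = T l - μ * n1l l - τ * n1l l := by
    intro l
    have e : ∀ j : Fin n, A (l, j) * r (l, j)
        = A (l, j) * Y (l, j) - μ * A (l, j) - τ * A (l, j) := by
      intro j
      have h := hAA (l, j)
      simp only [hrdef]
      linear_combination (-τ) * h
    rw [Finset.sum_congr rfl (fun j _ => e j), Finset.sum_sub_distrib,
      Finset.sum_sub_distrib, ← Finset.mul_sum, ← Finset.mul_sum, ← hn1l l]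
  have e2 : (∑ l, T l) - μ * n1 - τ * n1
      - c * ∑ l, n1l l * (S l - (n:ℝ) * μ - τ * n1l l) = 0 := by
    have h2 : (∑ p : Fin L × Fin n, A p * r p) = ∑ l, (T l - μ * n1l l - τ * n1l l) := by
      rw [Fintype.sum_prod_type]
      exact Finset.sum_congr rfl (fun l _ => hArl l)
    have h3 : (∑ l, (∑ j, A (l, j)) * (∑ j, r (l, j)))
        = ∑ l, n1l l * (S l - (n:ℝ) * μ - τ * n1l l) := by
      exact Finset.sum_congr rfl (fun l _ => by rw [← hn1l l, hRl l])
    rw [h2, h3, Finset.sum_sub_distrib, Finset.sum_sub_distrib, ← Finset.mul_sum,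
      ← Finset.mul_sum, ← hn1] at E2
    exact E2
  -- sum identities
  have hDτ1 : D * τ1 = ∑ l, n0l l * n1l l * (Yl1 l - Yl0 l) := by
    rw [hτ1]
    field_simp
  have hsum1 : (∑ l, n1l l * S l) = (n:ℝ) * (∑ l, T l) - D * τ1 := by
    rw [hDτ1, Finset.mul_sum, ← Finset.sum_sub_distrib]
    refine Finset.sum_congr rfl (fun l _ => ?_)
    rw [hSTl l, hTl l, hn0l l]
    ring
  have hsum2 : (∑ l, n1l l * n1l l) = (n:ℝ) * n1 - D := by
    rw [hn1, hDdef, Finset.mul_sum, ← Finset.sum_sub_distrib]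
    refine Finset.sum_congr rfl (fun l _ => ?_)
    rw [hn0l l]; ring
  have hsplit : (∑ l, n1l l * (S l - (n:ℝ) * μ - τ * n1l l))
      = (∑ l, n1l l * S l) - (n:ℝ) * μ * n1 - τ * ((n:ℝ) * n1 - D) := by
    have e : ∀ l : Fin L, n1l l * (S l - (n:ℝ) * μ - τ * n1l l)
        = n1l l * S l - (n:ℝ) * μ * n1l l - τ * (n1l l * n1l l) := by
      intro l; ring
    rw [Finset.sum_congr rfl (fun l _ => e l), Finset.sum_sub_distrib,
      Finset.sum_sub_distrib, ← Finset.mul_sum, ← Finset.mul_sum, ← hn1, hsum2]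
  have e2' : (σ02 + (n:ℝ)) * ((∑ l, T l) - μ * n1 - τ * n1)
      - ((∑ l, n1l l * S l) - (n:ℝ) * μ * n1 - τ * ((n:ℝ) * n1 - D)) = 0 := by
    rw [hsplit] at e2
    linear_combination (σ02 + (n:ℝ)) * e2
      + ((∑ l, n1l l * S l) - (n:ℝ) * μ * n1 - τ * ((n:ℝ) * n1 - D)) * hc1
  have e2'' : σ02 * n1 * Yb1 + D * τ1 - σ02 * μ * n1 - σ02 * τ * n1 - τ * D = 0 := by
    rw [hsum1, hTT] at e2'
    linear_combination e2'
  have e1' : n1 * Yb1 + n0 * Yb0 - N * μ - τ * n1 = 0 := by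
    rw [hSS] at e1; exact e1
  have key : τ * (n1 * n0 * σ02 + N * D) = N * D * τ1 + n1 * n0 * σ02 * (Yb1 - Yb0) := by
    linear_combination (-N) * e2'' + σ02 * n1 * e1' - σ02 * n1 * (Yb1 - τ) * hNsum
  have hNpos : 0 < N := by rw [hN]; positivity
  have hden : 0 < n1 * n0 * σ02 + N * D :=
    add_pos (mul_pos (mul_pos hn1pos hn0pos) hσ) (mul_pos hNpos hDpos)
  constructor
  · rw [Set.mem_Icc, hlam]
    refine ⟨div_nonneg (mul_pos hNpos hDpos).le hden.le, ?_⟩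
    rw [div_le_one hden]
    linarith [mul_pos (mul_pos hn1pos hn0pos) hσ]
  · have hden' : n1 * n0 * σ02 + N * D ≠ 0 := ne_of_gt hden
    have hlam1 : (1 : ℝ) - N * D / (n1 * n0 * σ02 + N * D)
        = n1 * n0 * σ02 / (n1 * n0 * σ02 + N * D) := by
      rw [eq_div_iff hden', sub_mul, div_mul_cancel₀ _ hden']
      ring
    rw [hlam, hτ0, hlam1, div_mul_eq_mul_div, div_mul_eq_mul_div, ← add_div,
      eq_div_iff hden']
    linear_combination key
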